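/- (Strict negativity of the second directional derivative) Let n ≥ 2, let p = (p_1,…,p_n) with 0 < p_i < 1 for all i, let l ≠ m in [n], and let D_u = ∂/∂p_l − ∂/∂p_m. Then D²_u H(Z_p) < 0. -/

import Mathlib

open Finset

/-- `b(k, S, p)`: the Poisson–binomial probability mass function built from the
parameters `p i`, `i ∈ S`, defined for all integers `k`. -/
noncomputable def pbinOn (n : ℕ) (S : Finset (Fin n)) (p : Fin n → ℝ) (k : ℤ) : ℝ :=
  ∑ A ∈ S.powerset.filter (fun A : Finset (Fin n) => (A.card : ℤ) = k),
    (∏ i ∈ A, p i) * ∏ j ∈ S \ A, (1 - p j)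

/-- Shannon entropy (base 2) of the Poisson–binomial distribution. -/
noncomputable def pbinEnt (n : ℕ) (p : Fin n → ℝ) : ℝ :=
  -∑ k ∈ Finset.range (n + 1),
    pbinOn n Finset.univ p k * Real.logb 2 (pbinOn n Finset.univ p k)

/-- The partial derivative with respect to the `l`-th coordinate. -/
noncomputable def pderiv (n : ℕ) (l : Fin n) (f : (Fin n → ℝ) → ℝ) (p : Fin n → ℝ) : ℝ :=
  deriv (fun x : ℝ => f (Function.update p l x)) (p l)

/-- The directional derivative operator `D_u = ∂/∂p_l − ∂/∂p_m`. -/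
noncomputable def Du (n : ℕ) (l m : Fin n) (f : (Fin n → ℝ) → ℝ) (p : Fin n → ℝ) : ℝ :=
  pderiv n l f p - pderiv n m f p



lemma pbinOn_congr {n : ℕ} {S : Finset (Fin n)} {p q : Fin n → ℝ}
    (h : ∀ i ∈ S, p i = q i) (k : ℤ) : pbinOn n S p k = pbinOn n S q k := by
  unfold pbinOn
  refine Finset.sum_congr rfl fun A hA => ?_
  simp only [mem_filter, mem_powerset] at hA
  congr 1
  · exact Finset.prod_congr rfl fun i hi => h i (hA.1 hi)
  · exact Finset.prod_congr rfl fun j hj => by rw [h j (mem_sdiff.1 hj).1]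

lemma pbinOn_eq_zero {n : ℕ} {S : Finset (Fin n)} (p : Fin n → ℝ) {k : ℤ}
    (h : k < 0 ∨ (S.card : ℤ) < k) : pbinOn n S p k = 0 := by
  unfold pbinOn
  have : S.powerset.filter (fun A : Finset (Fin n) => (A.card : ℤ) = k) = ∅ := by
    refine Finset.filter_eq_empty_iff.mpr fun A hA => ?_
    rw [mem_powerset] at hA
    have := Finset.card_le_card hA
    rcases h with h | h <;> intro hc <;> omega
  rw [this, Finset.sum_empty]

lemma pbinOn_nonneg {n : ℕ} {S : Finset (Fin n)} {p : Fin n → ℝ}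
    (hp : ∀ i, 0 ≤ p i ∧ p i ≤ 1) (k : ℤ) : 0 ≤ pbinOn n S p k :=
  Finset.sum_nonneg fun A _ => mul_nonneg
    (Finset.prod_nonneg fun i _ => (hp i).1)
    (Finset.prod_nonneg fun j _ => by linarith [(hp j).2])

lemma pbinOn_erase {n : ℕ} {S : Finset (Fin n)} {p : Fin n → ℝ} {i : Fin n}
    (hi : i ∈ S) (k : ℤ) :
    pbinOn n S p k
      = p i * pbinOn n (S.erase i) p (k - 1) + (1 - p i) * pbinOn n (S.erase i) p k := by
  classical
  have hiT : i ∉ S.erase i := notMem_erase i S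
  have hS : S = insert i (S.erase i) := (insert_erase hi).symm
  set T := S.erase i with hTdef
  unfold pbinOn
  rw [Finset.sum_filter, Finset.sum_filter, Finset.sum_filter]
  conv_lhs => rw [hS]
  rw [Finset.sum_powerset_insert hiT]
  have h1 : ∀ A ∈ T.powerset,
      (if ((A.card : ℤ) = k) then (∏ x ∈ A, p x) * ∏ j ∈ S \ A, (1 - p j) else 0)
      = (1 - p i) * (if ((A.card : ℤ) = k) then (∏ x ∈ A, p x) * ∏ j ∈ T \ A, (1 - p j) else 0) := by
    intro A hA
    rw [mem_powerset] at hA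
    have hiA : i ∉ A := fun h => hiT (hA h)
    have hsd : S \ A = insert i (T \ A) := by
      conv_lhs => rw [hS]
      exact insert_sdiff_of_notMem _ hiA
    have hiTA : i ∉ T \ A := fun h => hiT (mem_sdiff.1 h).1
    rw [hsd, Finset.prod_insert hiTA]
    split <;> ring
  have h2 : ∀ A ∈ T.powerset,
      (if (((insert i A).card : ℤ) = k) then
          (∏ x ∈ insert i A, p x) * ∏ j ∈ S \ insert i A, (1 - p j) else 0)
      = p i * (if ((A.card : ℤ) = k - 1) then (∏ x ∈ A, p x) * ∏ j ∈ T \ A, (1 - p j) else 0) := by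
    intro A hA
    rw [mem_powerset] at hA
    have hiA : i ∉ A := fun h => hiT (hA h)
    have hcard : (insert i A).card = A.card + 1 := card_insert_of_notMem hiA
    have hsd : S \ insert i A = T \ A := by
      conv_lhs => rw [hS]
      ext x
      simp only [mem_sdiff, mem_insert, not_or]
      constructor
      · rintro ⟨h1 | h1, h2, h3⟩
        · exact absurd h1 h2
        · exact ⟨h1, h3⟩
      · rintro ⟨h1, h3⟩
        exact ⟨Or.inr h1, fun he => hiT (he ▸ h1), h3⟩
    have hiff : (((insert i A).card : ℤ) = k) ↔ ((A.card : ℤ) = k - 1) := by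
      rw [hcard]; push_cast; omega
    rw [Finset.prod_insert hiA, hsd, if_congr hiff rfl rfl]
    split <;> ring
  rw [← hS]
  rw [Finset.sum_congr rfl h1, Finset.sum_congr rfl h2, ← Finset.mul_sum, ← Finset.mul_sum]
  ring

lemma pbinOn_pos {n : ℕ} {p : Fin n → ℝ} (hp : ∀ i, 0 < p i ∧ p i < 1)
    (S : Finset (Fin n)) : ∀ k : ℤ, 0 ≤ k → k ≤ (S.card : ℤ) → 0 < pbinOn n S p k := by
  classical
  have hp' : ∀ i, 0 ≤ p i ∧ p i ≤ 1 := fun i => ⟨(hp i).1.le, (hp i).2.le⟩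
  induction S using Finset.induction_on with
  | empty =>
    intro k h0 h1
    simp only [card_empty, Nat.cast_zero] at h1
    have : k = 0 := le_antisymm h1 h0
    subst this
    simp [pbinOn, Finset.filter_singleton]
  | @insert a s ha ih =>
    intro k h0 h1
    have hmem : a ∈ insert a s := mem_insert_self a s
    rw [pbinOn_erase hmem, Finset.erase_insert ha]
    rw [card_insert_of_notMem ha] at h1
    push_cast at h1
    have t1 : 0 ≤ p a * pbinOn n s p (k - 1) :=
      mul_nonneg (hp a).1.le (pbinOn_nonneg hp' _)
    have t2 : 0 ≤ (1 - p a) * pbinOn n s p k :=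
      mul_nonneg (by linarith [(hp a).2]) (pbinOn_nonneg hp' _)
    by_cases hk : k ≤ (s.card : ℤ)
    · have : 0 < (1 - p a) * pbinOn n s p k :=
        mul_pos (by linarith [(hp a).2]) (ih k h0 hk)
      linarith
    · have hk1 : k - 1 ≤ (s.card : ℤ) := by omega
      have hk0 : 0 ≤ k - 1 := by omega
      have : 0 < p a * pbinOn n s p (k - 1) := mul_pos (hp a).1 (ih _ hk0 hk1)
      linarith

lemma pbinOn_logConcave {n : ℕ} {p : Fin n → ℝ} (hp : ∀ i, 0 < p i ∧ p i < 1)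
    (S : Finset (Fin n)) : ∀ k : ℤ, 0 ≤ k → k + 2 ≤ (S.card : ℤ) →
    pbinOn n S p k * pbinOn n S p (k + 2) < pbinOn n S p (k + 1) ^ 2 := by
  classical
  have hp' : ∀ i, 0 ≤ p i ∧ p i ≤ 1 := fun i => ⟨(hp i).1.le, (hp i).2.le⟩
  induction S using Finset.induction_on with
  | empty =>
    intro k h0 h1
    simp only [card_empty, Nat.cast_zero] at h1
    omega
  | @insert a s ha ih =>
    intro k h0 h1
    rw [card_insert_of_notMem ha] at h1
    push_cast at h1
    set c := pbinOn n s p with hc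
    have ns : ∀ j : ℤ, c j * c (j + 2) ≤ c (j + 1) ^ 2 := by
      intro j
      by_cases hj0 : 0 ≤ j
      · by_cases hj1 : j + 2 ≤ (s.card : ℤ)
        · exact (ih j hj0 hj1).le
        · have h2 : c (j + 2) = 0 := pbinOn_eq_zero p (Or.inr (by omega))
          rw [h2, mul_zero]
          exact sq_nonneg _
      · have h2 : c j = 0 := pbinOn_eq_zero p (Or.inl (by omega))
        rw [h2, zero_mul]
        exact sq_nonneg _
    have hmem : a ∈ insert a s := mem_insert_self a s
    have hb : ∀ j : ℤ, pbinOn n (insert a s) p j = p a * c (j - 1) + (1 - p a) * c j := by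
      intro j
      rw [pbinOn_erase hmem, Finset.erase_insert ha]
    rw [hb, hb, hb]
    have hP1 : 0 < p a := (hp a).1
    have hP2 : 0 < 1 - p a := by linarith [(hp a).2]
    have hck : 0 < c k := pbinOn_pos hp s k h0 (by omega)
    have hck1 : 0 < c (k + 1) := pbinOn_pos hp s (k + 1) (by omega) (by omega)
    have T1 : c (k - 1) * c (k + 1) < c k ^ 2 := by
      rcases eq_or_lt_of_le h0 with h | h
      · have hz : c (k - 1) = 0 := pbinOn_eq_zero p (Or.inl (by omega))
        rw [hz, zero_mul]
        exact pow_pos hck 2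
      · have := ih (k - 1) (by omega) (by omega)
        rw [show k - 1 + 2 = k + 1 by ring, show k - 1 + 1 = k by ring] at this
        exact this
    have n1 : 0 ≤ c (k - 1) := pbinOn_nonneg hp' _
    have n2 : 0 ≤ c (k + 2) := pbinOn_nonneg hp' _
    have T2 : c (k - 1) * c (k + 2) ≤ c k * c (k + 1) := by
      have key : (c (k - 1) * c (k + 1)) * (c k * c (k + 2)) ≤ c k ^ 2 * c (k + 1) ^ 2 :=
        mul_le_mul T1.le (ns k) (mul_nonneg hck.le n2) (sq_nonneg _)
      nlinarith [mul_pos hck hck1]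
    have T3 : c k * c (k + 2) ≤ c (k + 1) ^ 2 := ns k
    rw [show k + 2 - 1 = k + 1 by ring, show k + 1 - 1 = k by ring]
    nlinarith [mul_pos (mul_pos hP1 hP1) (sub_pos.2 T1),
      mul_nonneg (mul_nonneg hP1.le hP2.le) (sub_nonneg.2 T2),
      mul_nonneg (mul_nonneg hP2.le hP2.le) (sub_nonneg.2 T3)]

noncomputable def BB (c : ℤ → ℝ) (x y : ℝ) (k : ℤ) : ℝ :=
  x * (y * c (k - 2) + (1 - y) * c (k - 1)) + (1 - x) * (y * c (k - 1) + (1 - y) * c k)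

noncomputable def dB (c : ℤ → ℝ) (y : ℝ) (k : ℤ) : ℝ :=
  (y * c (k - 2) + (1 - y) * c (k - 1)) - (y * c (k - 1) + (1 - y) * c k)

noncomputable def dd (c : ℤ → ℝ) (k : ℤ) : ℝ := (c (k - 2) - c (k - 1)) - (c (k - 1) - c k)

noncomputable def FF (c : ℤ → ℝ) (n : ℕ) (x y : ℝ) : ℝ :=
  -∑ k ∈ Finset.range (n + 1), BB c x y k * Real.logb 2 (BB c x y k)

noncomputable def GX (c : ℤ → ℝ) (n : ℕ) (x y : ℝ) : ℝ :=
  -∑ k ∈ Finset.range (n + 1), dB c y k * (Real.logb 2 (BB c x y k) + (Real.log 2)⁻¹)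

noncomputable def GY (c : ℤ → ℝ) (n : ℕ) (x y : ℝ) : ℝ :=
  -∑ k ∈ Finset.range (n + 1), dB c x k * (Real.logb 2 (BB c x y k) + (Real.log 2)⁻¹)

lemma BB_symm (c : ℤ → ℝ) (x y : ℝ) (k : ℤ) : BB c x y k = BB c y x k := by
  unfold BB; ring

lemma GY_eq_GX (c : ℤ → ℝ) (n : ℕ) (x y : ℝ) : GY c n x y = GX c n y x := by
  unfold GY GX
  congr 1
  exact Finset.sum_congr rfl fun k _ => by rw [BB_symm]

lemma FF_symm (c : ℤ → ℝ) (n : ℕ) (x y : ℝ) : FF c n x y = FF c n y x := by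
  unfold FF
  congr 1
  exact Finset.sum_congr rfl fun k _ => by rw [BB_symm]

lemma hasDerivAt_affine (a b x : ℝ) : HasDerivAt (fun t => a * t + b) a x := by
  simpa using ((hasDerivAt_id x).const_mul a).add_const b

lemma hasDerivAt_BB_x (c : ℤ → ℝ) (y : ℝ) (k : ℤ) (x : ℝ) :
    HasDerivAt (fun x' => BB c x' y k) (dB c y k) x := by
  have h : (fun x' => BB c x' y k)
      = fun x' => dB c y k * x' + (y * c (k - 1) + (1 - y) * c k) := by
    funext t; unfold BB dB; ring
  rw [h]; exact hasDerivAt_affine _ _ _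

lemma hasDerivAt_BB_y (c : ℤ → ℝ) (x : ℝ) (k : ℤ) (y : ℝ) :
    HasDerivAt (fun y' => BB c x y' k) (dB c x k) y := by
  have h : (fun y' => BB c x y' k) = fun y' => BB c y' x k := funext fun t => BB_symm c x t k
  rw [h]; exact hasDerivAt_BB_x c x k y

lemma hasDerivAt_dB (c : ℤ → ℝ) (k : ℤ) (x : ℝ) :
    HasDerivAt (fun x' => dB c x' k) (dd c k) x := by
  have h : (fun x' => dB c x' k) = fun x' => dd c k * x' + (c (k - 1) - c k) := by
    funext t; unfold dB dd; ring
  rw [h]; exact hasDerivAt_affine _ _ _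

lemma hasDerivAt_mul_logb {s : ℝ} (hs : 0 < s) :
    HasDerivAt (fun t => t * Real.logb 2 t) (Real.logb 2 s + (Real.log 2)⁻¹) s := by
  have h1 : HasDerivAt (fun t : ℝ => t * (Real.log t / Real.log 2))
      (1 * (Real.log s / Real.log 2) + s * (s⁻¹ / Real.log 2)) s :=
    (hasDerivAt_id s).mul ((Real.hasDerivAt_log hs.ne').div_const _)
  have h2 : (fun t : ℝ => t * Real.logb 2 t) = fun t => t * (Real.log t / Real.log 2) := by
    funext t; rw [Real.logb]
  rw [h2, Real.logb]
  convert h1 using 1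
  have hlog : Real.log 2 ≠ 0 := (Real.log_pos one_lt_two).ne'
  field_simp

lemma hasDerivAt_logb_comp {bf : ℝ → ℝ} {b' s : ℝ} (hb : HasDerivAt bf b' s) (hpos : 0 < bf s) :
    HasDerivAt (fun t => Real.logb 2 (bf t)) (b' / (bf s * Real.log 2)) s := by
  have h1 : HasDerivAt Real.log (bf s)⁻¹ (bf s) := Real.hasDerivAt_log hpos.ne'
  have h2 := (h1.comp s hb).div_const (Real.log 2)
  have h3 : (fun t => Real.logb 2 (bf t)) = fun t => Real.log (bf t) / Real.log 2 := by
    funext t; rw [Real.logb]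
  rw [h3]
  have hval : b' / (bf s * Real.log 2) = (bf s)⁻¹ * b' / Real.log 2 := by
    rw [division_def, division_def, mul_inv]
    ring
  rw [hval]
  exact h2

lemma hasDerivAt_FF_x (c : ℤ → ℝ) (n : ℕ) (x y : ℝ)
    (hpos : ∀ k ∈ Finset.range (n + 1), 0 < BB c x y (k : ℤ)) :
    HasDerivAt (fun x' => FF c n x' y) (GX c n x y) x := by
  have h : ∀ k ∈ Finset.range (n + 1),
      HasDerivAt (fun x' => BB c x' y (k : ℤ) * Real.logb 2 (BB c x' y (k : ℤ)))
        ((Real.logb 2 (BB c x y (k : ℤ)) + (Real.log 2)⁻¹) * dB c y (k : ℤ)) x :=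
    fun k hk => by
      have := (hasDerivAt_mul_logb (hpos k hk)).comp x (hasDerivAt_BB_x c y k x)
      exact this
  have hs := (HasDerivAt.fun_sum h).neg
  have hval : GX c n x y
      = -∑ k ∈ Finset.range (n + 1),
          (Real.logb 2 (BB c x y (k : ℤ)) + (Real.log 2)⁻¹) * dB c y (k : ℤ) := by
    unfold GX; congr 1; exact Finset.sum_congr rfl fun k _ => by ring
  rw [hval]
  exact hs

lemma hasDerivAt_FF_y (c : ℤ → ℝ) (n : ℕ) (x y : ℝ)
    (hpos : ∀ k ∈ Finset.range (n + 1), 0 < BB c x y (k : ℤ)) :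
    HasDerivAt (fun y' => FF c n x y') (GY c n x y) y := by
  have h : (fun y' => FF c n x y') = fun y' => FF c n y' x := funext fun t => FF_symm c n x t
  rw [h, GY_eq_GX]
  exact hasDerivAt_FF_x c n y x (fun k hk => BB_symm c x y k ▸ hpos k hk)

lemma hasDerivAt_GX_x (c : ℤ → ℝ) (n : ℕ) (x y : ℝ)
    (hpos : ∀ k ∈ Finset.range (n + 1), 0 < BB c x y (k : ℤ)) :
    HasDerivAt (fun x' => GX c n x' y)
      (-∑ k ∈ Finset.range (n + 1),
        dB c y k * (dB c y k / (BB c x y k * Real.log 2))) x := by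
  have h : ∀ k ∈ Finset.range (n + 1),
      HasDerivAt (fun x' => dB c y (k : ℤ) * (Real.logb 2 (BB c x' y (k : ℤ)) + (Real.log 2)⁻¹))
        (dB c y (k : ℤ) * (dB c y (k : ℤ) / (BB c x y (k : ℤ) * Real.log 2))) x := fun k hk =>
    (((hasDerivAt_logb_comp (hasDerivAt_BB_x c y k x) (hpos k hk)).add_const
      (Real.log 2)⁻¹)).const_mul _
  exact (HasDerivAt.fun_sum h).neg

lemma hasDerivAt_GX_y (c : ℤ → ℝ) (n : ℕ) (x y : ℝ)
    (hpos : ∀ k ∈ Finset.range (n + 1), 0 < BB c x y (k : ℤ)) :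
    HasDerivAt (fun y' => GX c n x y')
      (-∑ k ∈ Finset.range (n + 1),
        (dd c k * (Real.logb 2 (BB c x y k) + (Real.log 2)⁻¹)
          + dB c y k * (dB c x k / (BB c x y k * Real.log 2)))) y := by
  have h : ∀ k ∈ Finset.range (n + 1),
      HasDerivAt (fun y' => dB c y' (k : ℤ) * (Real.logb 2 (BB c x y' (k : ℤ)) + (Real.log 2)⁻¹))
        (dd c (k : ℤ) * (Real.logb 2 (BB c x y (k : ℤ)) + (Real.log 2)⁻¹)
          + dB c y (k : ℤ) * (dB c x (k : ℤ) / (BB c x y (k : ℤ) * Real.log 2))) y := fun k hk =>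
    (hasDerivAt_dB c k y).mul
      ((hasDerivAt_logb_comp (hasDerivAt_BB_y c x k y) (hpos k hk)).add_const (Real.log 2)⁻¹)
  exact (HasDerivAt.fun_sum h).neg

lemma hasDerivAt_GY_x (c : ℤ → ℝ) (n : ℕ) (x y : ℝ)
    (hpos : ∀ k ∈ Finset.range (n + 1), 0 < BB c x y (k : ℤ)) :
    HasDerivAt (fun x' => GY c n x' y)
      (-∑ k ∈ Finset.range (n + 1),
        (dd c k * (Real.logb 2 (BB c x y k) + (Real.log 2)⁻¹)
          + dB c x k * (dB c y k / (BB c x y k * Real.log 2)))) x := by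
  have h : (fun x' => GY c n x' y) = fun x' => GX c n y x' := funext fun t => GY_eq_GX c n t y
  rw [h]
  have h2 := hasDerivAt_GX_y c n y x (fun k hk => BB_symm c x y k ▸ hpos k hk)
  have hval : (-∑ k ∈ Finset.range (n + 1),
      (dd c k * (Real.logb 2 (BB c x y k) + (Real.log 2)⁻¹)
        + dB c x k * (dB c y k / (BB c x y k * Real.log 2))))
      = (-∑ k ∈ Finset.range (n + 1),
      (dd c k * (Real.logb 2 (BB c y x k) + (Real.log 2)⁻¹)
        + dB c x k * (dB c y k / (BB c y x k * Real.log 2)))) := by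
    congr 1
    exact Finset.sum_congr rfl fun k _ => by rw [BB_symm c x y]
  rw [hval]
  exact h2

lemma hasDerivAt_GY_y (c : ℤ → ℝ) (n : ℕ) (x y : ℝ)
    (hpos : ∀ k ∈ Finset.range (n + 1), 0 < BB c x y (k : ℤ)) :
    HasDerivAt (fun y' => GY c n x y')
      (-∑ k ∈ Finset.range (n + 1),
        dB c x k * (dB c x k / (BB c x y k * Real.log 2))) y := by
  have h : (fun y' => GY c n x y') = fun y' => GX c n y' x := funext fun t => GY_eq_GX c n x t
  rw [h]
  have h2 := hasDerivAt_GX_x c n y x (fun k hk => BB_symm c x y k ▸ hpos k hk)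
  have hval : (-∑ k ∈ Finset.range (n + 1),
      dB c x k * (dB c x k / (BB c x y k * Real.log 2)))
      = (-∑ k ∈ Finset.range (n + 1),
      dB c x k * (dB c x k / (BB c y x k * Real.log 2))) := by
    congr 1
    exact Finset.sum_congr rfl fun k _ => by rw [BB_symm c x y]
  rw [hval]
  exact h2

lemma sum_range_int (g : ℤ → ℝ) (N : ℕ) :
    ∑ k ∈ Finset.range N, g (k : ℤ) = ∑ k ∈ Finset.Icc (0 : ℤ) ((N : ℤ) - 1), g k := by
  induction N with
  | zero => simp
  | succ N ih =>
    rw [Finset.sum_range_succ, ih]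
    have h1 : Finset.Icc (0 : ℤ) ((N : ℤ) + 1 - 1) = insert (N : ℤ) (Finset.Icc 0 ((N : ℤ) - 1)) := by
      ext t
      simp only [Finset.mem_Icc, Finset.mem_insert]
      omega
    have h2 : (N : ℤ) ∉ Finset.Icc (0 : ℤ) ((N : ℤ) - 1) := by
      simp only [Finset.mem_Icc]
      omega
    push_cast
    rw [h1, Finset.sum_insert h2]
    ring

lemma sum_Icc_shift (f : ℤ → ℝ) (a b t : ℤ) :
    ∑ k ∈ Finset.Icc a b, f (k - t) = ∑ j ∈ Finset.Icc (a - t) (b - t), f j := by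
  have h : Finset.Icc a b = (Finset.Icc (a - t) (b - t)).map (addRightEmbedding t) := by
    rw [Finset.map_add_right_Icc]
    congr 1 <;> ring
  rw [h, Finset.sum_map]
  exact Finset.sum_congr rfl fun j _ => by
    simp only [addRightEmbedding_apply, add_sub_cancel_right]

noncomputable def LL (n : ℕ) (p : Fin n → ℝ) (j : ℤ) : ℝ :=
  Real.logb 2 (pbinOn n Finset.univ p j) + (Real.log 2)⁻¹

/-- Strict negativity of the second directional derivative of the entropy
along `u = e_l − e_m` : `D²_u H(Z_p) < 0` on the open cube. -/
theorem second_directional_deriv_entropy_neg (n : ℕ) (hn : 2 ≤ n) (p : Fin n → ℝ)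
    (hp : ∀ i, 0 < p i ∧ p i < 1) (l m : Fin n) (hlm : l ≠ m) :
    Du n l m (fun q => Du n l m (fun r => pbinEnt n r) q) p < 0 := by
  classical
  have hp' : ∀ i, 0 ≤ p i ∧ p i ≤ 1 := fun i => ⟨(hp i).1.le, (hp i).2.le⟩
  have hml : m ∈ Finset.univ.erase l := Finset.mem_erase.2 ⟨Ne.symm hlm, Finset.mem_univ m⟩
  set T : Finset (Fin n) := (Finset.univ.erase l).erase m with hT
  set c : ℤ → ℝ := pbinOn n T p with hcdef
  have hcardT : (T.card : ℤ) = (n : ℤ) - 2 := by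
    rw [hT, Finset.card_erase_of_mem hml, Finset.card_erase_of_mem (Finset.mem_univ l),
      Finset.card_univ, Fintype.card_fin]
    omega
  have hcpos : ∀ j : ℤ, 0 ≤ j → j ≤ (n : ℤ) - 2 → 0 < c j := by
    intro j h1 h2
    rw [hcdef]
    exact pbinOn_pos hp T j h1 (by omega)
  have hcnn : ∀ j : ℤ, 0 ≤ c j := by
    intro j; rw [hcdef]; exact pbinOn_nonneg hp' j
  have hczero : ∀ j : ℤ, (j < 0 ∨ (n : ℤ) - 2 < j) → c j = 0 := by
    intro j hj
    rw [hcdef]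
    exact pbinOn_eq_zero p (by omega)
  have hdecomp : ∀ (x y : ℝ) (k : ℤ),
      pbinOn n Finset.univ (Function.update (Function.update p l x) m y) k = BB c x y k := by
    intro x y k
    set q := Function.update (Function.update p l x) m y with hq
    have hql : q l = x := by rw [hq, Function.update_of_ne hlm, Function.update_self]
    have hqm : q m = y := by rw [hq, Function.update_self]
    have hqT : ∀ i ∈ T, q i = p i := by
      intro i hi
      rw [hT] at hi
      simp only [Finset.mem_erase, Finset.mem_univ, and_true] at hi
      rw [hq, Function.update_of_ne hi.1, Function.update_of_ne hi.2]
    rw [pbinOn_erase (Finset.mem_univ l) k, pbinOn_erase hml (k - 1), pbinOn_erase hml k, ← hT]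
    rw [pbinOn_congr hqT (k - 1 - 1), pbinOn_congr hqT (k - 1), pbinOn_congr hqT k]
    rw [hql, hqm, ← hcdef]
    unfold BB
    rw [show k - 1 - 1 = k - 2 by ring]
  have hent : ∀ x y : ℝ,
      pbinEnt n (Function.update (Function.update p l x) m y) = FF c n x y := by
    intro x y
    unfold pbinEnt FF
    congr 1
    exact Finset.sum_congr rfl fun k _ => by rw [hdecomp x y (k : ℤ)]
  have hBpos : ∀ x ∈ Set.Ioo (0:ℝ) 1, ∀ y ∈ Set.Ioo (0:ℝ) 1,
      ∀ k ∈ Finset.range (n + 1), 0 < BB c x y (k : ℤ) := by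
    rintro x ⟨hx0, hx1⟩ y ⟨hy0, hy1⟩ k hk
    rw [Finset.mem_range] at hk
    have h0 : (0:ℤ) ≤ (k:ℤ) := Int.natCast_nonneg k
    have hkn : (k:ℤ) ≤ (n:ℤ) := by omega
    have hx1' : (0:ℝ) < 1 - x := by linarith
    have hy1' : (0:ℝ) < 1 - y := by linarith
    unfold BB
    have a2 := hcnn ((k:ℤ) - 2)
    have a1 := hcnn ((k:ℤ) - 1)
    have a0 := hcnn (k:ℤ)
    by_cases h1 : (k:ℤ) ≤ (n:ℤ) - 2
    · nlinarith [mul_nonneg (mul_nonneg hx0.le hy0.le) a2,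
        mul_nonneg (mul_nonneg hx0.le hy1'.le) a1,
        mul_nonneg (mul_nonneg hx1'.le hy0.le) a1,
        mul_pos (mul_pos hx1' hy1') (hcpos (k:ℤ) h0 h1)]
    · by_cases h2 : (k:ℤ) ≤ (n:ℤ) - 1
      · nlinarith [mul_nonneg (mul_nonneg hx0.le hy0.le) a2,
          mul_pos (mul_pos hx0 hy1') (hcpos ((k:ℤ) - 1) (by omega) (by omega)),
          mul_nonneg (mul_nonneg hx1'.le hy0.le) a1,
          mul_nonneg (mul_nonneg hx1'.le hy1'.le) a0]
      · nlinarith [mul_pos (mul_pos hx0 hy0) (hcpos ((k:ℤ) - 2) (by omega) (by omega)),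
          mul_nonneg (mul_nonneg hx0.le hy1'.le) a1,
          mul_nonneg (mul_nonneg hx1'.le hy0.le) a1,
          mul_nonneg (mul_nonneg hx1'.le hy1'.le) a0]
  have hx₀ : p l ∈ Set.Ioo (0:ℝ) 1 := ⟨(hp l).1, (hp l).2⟩
  have hy₀ : p m ∈ Set.Ioo (0:ℝ) 1 := ⟨(hp m).1, (hp m).2⟩
  have hpos0 : ∀ k ∈ Finset.range (n + 1), 0 < BB c (p l) (p m) (k : ℤ) :=
    hBpos _ hx₀ _ hy₀
  have hupd_self : ∀ s : ℝ, Function.update (Function.update p l s) m (p m)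
      = Function.update p l s := by
    intro s
    rw [show p m = (Function.update p l s) m from (Function.update_of_ne (Ne.symm hlm) s p).symm]
    exact Function.update_eq_self m _
  have hinner_l : ∀ x ∈ Set.Ioo (0:ℝ) 1,
      Du n l m (fun r => pbinEnt n r) (Function.update p l x)
        = GX c n x (p m) - GY c n x (p m) := by
    intro x hx
    show deriv (fun s => pbinEnt n (Function.update (Function.update p l x) l s))
          (Function.update p l x l)
        - deriv (fun s => pbinEnt n (Function.update (Function.update p l x) m s))
          (Function.update p l x m) = _
    have e1 : (fun s => pbinEnt n (Function.update (Function.update p l x) l s))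
        = fun s => FF c n s (p m) := by
      funext s
      rw [Function.update_idem, ← hupd_self s]
      exact hent s (p m)
    have e2 : (fun s => pbinEnt n (Function.update (Function.update p l x) m s))
        = fun s => FF c n x s := by
      funext s
      exact hent x s
    rw [e1, e2, Function.update_self, Function.update_of_ne (Ne.symm hlm)]
    rw [(hasDerivAt_FF_x c n x (p m) (hBpos x hx (p m) hy₀)).deriv,
        (hasDerivAt_FF_y c n x (p m) (hBpos x hx (p m) hy₀)).deriv]
  have hinner_m : ∀ y ∈ Set.Ioo (0:ℝ) 1,
      Du n l m (fun r => pbinEnt n r) (Function.update p m y)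
        = GX c n (p l) y - GY c n (p l) y := by
    intro y hy
    show deriv (fun s => pbinEnt n (Function.update (Function.update p m y) l s))
          (Function.update p m y l)
        - deriv (fun s => pbinEnt n (Function.update (Function.update p m y) m s))
          (Function.update p m y m) = _
    have e1 : (fun s => pbinEnt n (Function.update (Function.update p m y) l s))
        = fun s => FF c n s y := by
      funext s
      rw [Function.update_comm (Ne.symm hlm)]
      exact hent s y
    have e2 : (fun s => pbinEnt n (Function.update (Function.update p m y) m s))
        = fun s => FF c n (p l) s := by
      funext s
      rw [Function.update_idem,
        show Function.update p m s = Function.update (Function.update p l (p l)) m s by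
          rw [Function.update_eq_self]]
      exact hent (p l) s
    rw [e1, e2, Function.update_of_ne hlm, Function.update_self]
    rw [(hasDerivAt_FF_x c n (p l) y (hBpos _ hx₀ y hy)).deriv,
        (hasDerivAt_FF_y c n (p l) y (hBpos _ hx₀ y hy)).deriv]
  have houter_l : deriv (fun x => Du n l m (fun r => pbinEnt n r) (Function.update p l x)) (p l)
      = (-∑ k ∈ Finset.range (n + 1),
            dB c (p m) (k:ℤ) * (dB c (p m) (k:ℤ) / (BB c (p l) (p m) (k:ℤ) * Real.log 2)))
        - (-∑ k ∈ Finset.range (n + 1),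
            (dd c (k:ℤ) * (Real.logb 2 (BB c (p l) (p m) (k:ℤ)) + (Real.log 2)⁻¹)
              + dB c (p l) (k:ℤ) * (dB c (p m) (k:ℤ) / (BB c (p l) (p m) (k:ℤ) * Real.log 2)))) := by
    have hev : (fun x => Du n l m (fun r => pbinEnt n r) (Function.update p l x))
        =ᶠ[nhds (p l)] fun x => GX c n x (p m) - GY c n x (p m) :=
      Filter.eventuallyEq_of_mem (Ioo_mem_nhds (hp l).1 (hp l).2) hinner_l
    rw [hev.deriv_eq]
    exact ((hasDerivAt_GX_x c n (p l) (p m) hpos0).sub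
      (hasDerivAt_GY_x c n (p l) (p m) hpos0)).deriv
  have houter_m : deriv (fun y => Du n l m (fun r => pbinEnt n r) (Function.update p m y)) (p m)
      = (-∑ k ∈ Finset.range (n + 1),
            (dd c (k:ℤ) * (Real.logb 2 (BB c (p l) (p m) (k:ℤ)) + (Real.log 2)⁻¹)
              + dB c (p m) (k:ℤ) * (dB c (p l) (k:ℤ) / (BB c (p l) (p m) (k:ℤ) * Real.log 2))))
        - (-∑ k ∈ Finset.range (n + 1),
            dB c (p l) (k:ℤ) * (dB c (p l) (k:ℤ) / (BB c (p l) (p m) (k:ℤ) * Real.log 2))) := by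
    have hev : (fun y => Du n l m (fun r => pbinEnt n r) (Function.update p m y))
        =ᶠ[nhds (p m)] fun y => GX c n (p l) y - GY c n (p l) y :=
      Filter.eventuallyEq_of_mem (Ioo_mem_nhds (hp m).1 (hp m).2) hinner_m
    rw [hev.deriv_eq]
    exact ((hasDerivAt_GX_y c n (p l) (p m) hpos0).sub
      (hasDerivAt_GY_y c n (p l) (p m) hpos0)).deriv
  -- the value of b_k at the point
  have hBb : ∀ j : ℤ, BB c (p l) (p m) j = pbinOn n Finset.univ p j := by
    intro j
    rw [← hdecomp (p l) (p m) j, Function.update_eq_self, Function.update_eq_self]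
  -- negativity of the "log-concavity" sum
  have hsum_neg : ∑ k ∈ Finset.range (n + 1),
      dd c (k:ℤ) * (Real.logb 2 (BB c (p l) (p m) (k:ℤ)) + (Real.log 2)⁻¹) < 0 := by
    have step0 : ∑ k ∈ Finset.range (n + 1),
        dd c (k:ℤ) * (Real.logb 2 (BB c (p l) (p m) (k:ℤ)) + (Real.log 2)⁻¹)
        = ∑ k ∈ Finset.range (n + 1), (fun j => dd c j * LL n p j) (k:ℤ) := by
      refine Finset.sum_congr rfl fun k _ => ?_
      rw [hBb (k:ℤ)]
      rfl
    have step1 : ∑ k ∈ Finset.range (n + 1), (fun j => dd c j * LL n p j) (k:ℤ)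
        = ∑ k ∈ Finset.Icc (0:ℤ) (n:ℤ), dd c k * LL n p k := by
      rw [sum_range_int (fun j => dd c j * LL n p j) (n + 1)]
      congr 1
      push_cast
      ring_nf
    have hS1 : ∑ k ∈ Finset.Icc (0:ℤ) (n:ℤ), c (k - 2) * LL n p k
        = ∑ j ∈ Finset.Icc (0:ℤ) ((n:ℤ) - 2), c j * LL n p (j + 2) := by
      have e1 : ∑ k ∈ Finset.Icc (0:ℤ) (n:ℤ), c (k - 2) * LL n p k
          = ∑ k ∈ Finset.Icc (0:ℤ) (n:ℤ), (fun j => c j * LL n p (j + 2)) (k - 2) :=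
        Finset.sum_congr rfl fun k _ => by
          simp only
          rw [show k - 2 + 2 = k by ring]
      rw [e1, sum_Icc_shift (fun j => c j * LL n p (j + 2)) 0 (n:ℤ) 2]
      refine (Finset.sum_subset (Finset.Icc_subset_Icc (by omega) (by omega)) ?_).symm
      intro j hj hj2
      simp only [Finset.mem_Icc, not_and, not_le] at hj hj2
      rw [hczero j (by omega), zero_mul]
    have hS2 : ∑ k ∈ Finset.Icc (0:ℤ) (n:ℤ), c (k - 1) * LL n p k
        = ∑ j ∈ Finset.Icc (0:ℤ) ((n:ℤ) - 2), c j * LL n p (j + 1) := by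
      have e1 : ∑ k ∈ Finset.Icc (0:ℤ) (n:ℤ), c (k - 1) * LL n p k
          = ∑ k ∈ Finset.Icc (0:ℤ) (n:ℤ), (fun j => c j * LL n p (j + 1)) (k - 1) :=
        Finset.sum_congr rfl fun k _ => by
          simp only
          rw [show k - 1 + 1 = k by ring]
      rw [e1, sum_Icc_shift (fun j => c j * LL n p (j + 1)) 0 (n:ℤ) 1]
      refine (Finset.sum_subset (Finset.Icc_subset_Icc (by omega) (by omega)) ?_).symm
      intro j hj hj2
      simp only [Finset.mem_Icc, not_and, not_le] at hj hj2
      rw [hczero j (by omega), zero_mul]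
    have hS3 : ∑ k ∈ Finset.Icc (0:ℤ) (n:ℤ), c k * LL n p k
        = ∑ j ∈ Finset.Icc (0:ℤ) ((n:ℤ) - 2), c j * LL n p j := by
      refine (Finset.sum_subset (Finset.Icc_subset_Icc (by omega) (by omega)) ?_).symm
      intro j hj hj2
      simp only [Finset.mem_Icc, not_and, not_le] at hj hj2
      rw [hczero j (by omega), zero_mul]
    have hsplit : ∑ k ∈ Finset.Icc (0:ℤ) (n:ℤ), dd c k * LL n p k
        = (∑ k ∈ Finset.Icc (0:ℤ) (n:ℤ), c (k - 2) * LL n p k)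
          - 2 * (∑ k ∈ Finset.Icc (0:ℤ) (n:ℤ), c (k - 1) * LL n p k)
          + ∑ k ∈ Finset.Icc (0:ℤ) (n:ℤ), c k * LL n p k := by
      rw [Finset.mul_sum, ← Finset.sum_sub_distrib, ← Finset.sum_add_distrib]
      exact Finset.sum_congr rfl fun k _ => by unfold dd; ring
    have hfin : ∑ k ∈ Finset.Icc (0:ℤ) (n:ℤ), dd c k * LL n p k
        = ∑ j ∈ Finset.Icc (0:ℤ) ((n:ℤ) - 2),
            c j * (LL n p (j + 2) - 2 * LL n p (j + 1) + LL n p j) := by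
      rw [hsplit, hS1, hS2, hS3, Finset.mul_sum, ← Finset.sum_sub_distrib,
        ← Finset.sum_add_distrib]
      exact Finset.sum_congr rfl fun j _ => by ring
    rw [step0, step1, hfin]
    refine Finset.sum_neg ?_ ⟨0, by rw [Finset.mem_Icc]; omega⟩
    intro j hj
    rw [Finset.mem_Icc] at hj
    have hcj : 0 < c j := hcpos j hj.1 hj.2
    have hbp : ∀ i : ℤ, 0 ≤ i → i ≤ (n:ℤ) → 0 < pbinOn n Finset.univ p i := by
      intro i h1 h2
      refine pbinOn_pos hp Finset.univ i h1 ?_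
      rwa [Finset.card_univ, Fintype.card_fin]
    have h1 := hbp j hj.1 (by omega)
    have h2' := hbp (j + 1) (by omega) (by omega)
    have h3 := hbp (j + 2) (by omega) (by omega)
    have hlc := pbinOn_logConcave hp Finset.univ j hj.1
      (by rw [Finset.card_univ, Fintype.card_fin]; omega)
    have hlog : Real.logb 2 (pbinOn n Finset.univ p j * pbinOn n Finset.univ p (j + 2))
        < Real.logb 2 (pbinOn n Finset.univ p (j + 1) ^ 2) :=
      Real.logb_lt_logb one_lt_two (mul_pos h1 h3) hlc
    rw [Real.logb_mul h1.ne' h3.ne', Real.logb_pow] at hlog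
    have hneg : LL n p (j + 2) - 2 * LL n p (j + 1) + LL n p j < 0 := by
      unfold LL
      push_cast at hlog
      linarith
    exact mul_neg_of_pos_of_neg hcj hneg
  -- assemble
  show deriv (fun x => Du n l m (fun r => pbinEnt n r) (Function.update p l x)) (p l)
      - deriv (fun y => Du n l m (fun r => pbinEnt n r) (Function.update p m y)) (p m) < 0
  rw [houter_l, houter_m]
  have key : ∀ f1 f2 f3 f4 g : ℕ → ℝ,
      (∀ k ∈ Finset.range (n + 1), f2 k + f3 k - (f1 k + f4 k) = g k) →
      ((-∑ k ∈ Finset.range (n + 1), f1 k) - (-∑ k ∈ Finset.range (n + 1), f2 k))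
        - ((-∑ k ∈ Finset.range (n + 1), f3 k) - (-∑ k ∈ Finset.range (n + 1), f4 k))
      = ∑ k ∈ Finset.range (n + 1), g k := by
    intro f1 f2 f3 f4 g h
    rw [← Finset.sum_congr rfl h]
    rw [Finset.sum_sub_distrib, Finset.sum_add_distrib, Finset.sum_add_distrib]
    ring
  rw [key
    (fun k => dB c (p m) (k:ℤ) * (dB c (p m) (k:ℤ) / (BB c (p l) (p m) (k:ℤ) * Real.log 2)))
    (fun k => dd c (k:ℤ) * (Real.logb 2 (BB c (p l) (p m) (k:ℤ)) + (Real.log 2)⁻¹)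
      + dB c (p l) (k:ℤ) * (dB c (p m) (k:ℤ) / (BB c (p l) (p m) (k:ℤ) * Real.log 2)))
    (fun k => dd c (k:ℤ) * (Real.logb 2 (BB c (p l) (p m) (k:ℤ)) + (Real.log 2)⁻¹)
      + dB c (p m) (k:ℤ) * (dB c (p l) (k:ℤ) / (BB c (p l) (p m) (k:ℤ) * Real.log 2)))
    (fun k => dB c (p l) (k:ℤ) * (dB c (p l) (k:ℤ) / (BB c (p l) (p m) (k:ℤ) * Real.log 2)))
    (fun k => 2 * (dd c (k:ℤ) * (Real.logb 2 (BB c (p l) (p m) (k:ℤ)) + (Real.log 2)⁻¹))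
      - (dB c (p l) (k:ℤ) - dB c (p m) (k:ℤ)) ^ 2 / (BB c (p l) (p m) (k:ℤ) * Real.log 2))
    (fun k _ => by ring)]
  have hle : ∑ k ∈ Finset.range (n + 1),
      (2 * (dd c (k:ℤ) * (Real.logb 2 (BB c (p l) (p m) (k:ℤ)) + (Real.log 2)⁻¹))
        - (dB c (p l) (k:ℤ) - dB c (p m) (k:ℤ)) ^ 2 / (BB c (p l) (p m) (k:ℤ) * Real.log 2))
      ≤ ∑ k ∈ Finset.range (n + 1),
      2 * (dd c (k:ℤ) * (Real.logb 2 (BB c (p l) (p m) (k:ℤ)) + (Real.log 2)⁻¹)) := by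
    refine Finset.sum_le_sum fun k hk => ?_
    have hnn : 0 ≤ (dB c (p l) (k:ℤ) - dB c (p m) (k:ℤ)) ^ 2
        / (BB c (p l) (p m) (k:ℤ) * Real.log 2) :=
      div_nonneg (sq_nonneg _) (mul_nonneg (hpos0 k hk).le (Real.log_nonneg one_le_two))
    linarith
  have heq : ∑ k ∈ Finset.range (n + 1),
      2 * (dd c (k:ℤ) * (Real.logb 2 (BB c (p l) (p m) (k:ℤ)) + (Real.log 2)⁻¹))
      = 2 * ∑ k ∈ Finset.range (n + 1),
        dd c (k:ℤ) * (Real.logb 2 (BB c (p l) (p m) (k:ℤ)) + (Real.log 2)⁻¹) := by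
    rw [Finset.mul_sum]
  linarith [hsum_neg, hle, heq.le]
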